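/- Let j, k ≥ 1 with n−j−k ≥ 1 and let λ satisfy k < λ < n−j. Then applying to f₀(t) = t^{−λ} the operator I_{j,k}, one gets (I_{j,k} f₀)(s) = c_{j,k} s^{k−λ} for all s > 0, where c_{j,k} = π^{k/2} Γ((n−k)/2) Γ((λ−k)/2) Γ((n−j−λ)/2) / (Γ((n−j−k)/2) Γ(λ/2) Γ((n−λ)/2)). -/

import Mathlib

open MeasureTheory Set ENNReal

/-- The Erdélyi–Kober fractional integral of the first kind. -/
noncomputable def EKplus (β : ℝ) (g : ℝ → ℝ≥0∞) (t : ℝ) : ℝ≥0∞ :=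
  ENNReal.ofReal (2 / Real.Gamma β) *
    ∫⁻ r in Ioo (0:ℝ) t, ENNReal.ofReal ((t ^ 2 - r ^ 2) ^ (β - 1) * r) * g r

/-- The Erdélyi–Kober fractional integral of the second kind. -/
noncomputable def EKminus (β : ℝ) (g : ℝ → ℝ≥0∞) (t : ℝ) : ℝ≥0∞ :=
  ENNReal.ofReal (2 / Real.Gamma β) *
    ∫⁻ r in Ioi t, ENNReal.ofReal ((r ^ 2 - t ^ 2) ^ (β - 1) * r) * g r

lemma realBeta {a b : ℝ} (ha : 0 < a) (hb : 0 < b) :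
    ∫ x in (0:ℝ)..1, x ^ (a-1) * (1-x) ^ (b-1)
      = Real.Gamma a * Real.Gamma b / Real.Gamma (a+b) := by
  have key := Complex.Gamma_mul_Gamma_eq_betaIntegral (s := (a:ℂ)) (t := (b:ℂ))
    (by simpa using ha) (by simpa using hb)
  have h1 : Complex.betaIntegral a b
      = ∫ x in (0:ℝ)..1, ((x ^ (a-1) * (1-x) ^ (b-1) : ℝ) : ℂ) := by
    refine intervalIntegral.integral_congr fun x hx => ?_
    rw [uIcc_of_le (by norm_num)] at hx
    rw [Complex.ofReal_mul, Complex.ofReal_cpow hx.1, Complex.ofReal_cpow (by linarith [hx.2] : (0:ℝ) ≤ 1 - x)]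
    push_cast
    ring
  rw [h1, intervalIntegral.integral_ofReal, ← Complex.ofReal_add, Complex.Gamma_ofReal,
    Complex.Gamma_ofReal, Complex.Gamma_ofReal, ← Complex.ofReal_mul, ← Complex.ofReal_mul] at key
  have heq := Complex.ofReal_inj.mp key
  have hG : Real.Gamma (a+b) ≠ 0 := (Real.Gamma_pos_of_pos (by linarith)).ne'
  field_simp
  linarith [heq]

lemma betaLintegral {a b : ℝ} (ha : 0 < a) (hb : 0 < b) :
    ∫⁻ x in Ioo (0:ℝ) 1, ENNReal.ofReal (x ^ (a-1) * (1-x) ^ (b-1))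
      = ENNReal.ofReal (Real.Gamma a * Real.Gamma b / Real.Gamma (a+b)) := by
  have hconv := Complex.betaIntegral_convergent (u := (a:ℂ)) (v := (b:ℂ))
    (by simpa using ha) (by simpa using hb)
  have hint : IntegrableOn (fun x : ℝ => x ^ (a-1) * (1-x) ^ (b-1)) (Ioc (0:ℝ) 1) := by
    have h2 : IntegrableOn (fun x : ℝ => ((x:ℂ) ^ ((a:ℂ)-1) * ((1:ℂ)-x) ^ ((b:ℂ)-1))) (Ioc (0:ℝ) 1) :=
      (intervalIntegrable_iff_integrableOn_Ioc_of_le (by norm_num)).mp hconv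
    have h3 : IntegrableOn (fun x : ℝ => RCLike.re ((x:ℂ) ^ ((a:ℂ)-1) * ((1:ℂ)-x) ^ ((b:ℂ)-1))) (Ioc (0:ℝ) 1) := h2.re
    refine h3.congr_fun (fun x hx => ?_) measurableSet_Ioc
    have h0 : (0:ℝ) ≤ x := le_of_lt hx.1
    have h1 : (0:ℝ) ≤ 1 - x := by linarith [hx.2]
    have he : ((x:ℂ) ^ ((a:ℂ)-1) * ((1:ℂ)-x) ^ ((b:ℂ)-1)) = ((x ^ (a-1) * (1-x) ^ (b-1) : ℝ) : ℂ) := by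
      rw [Complex.ofReal_mul, Complex.ofReal_cpow h0, Complex.ofReal_cpow h1]
      push_cast
      ring
    simp [he]
  rw [← ofReal_integral_eq_lintegral_ofReal (hint.mono_set Ioo_subset_Ioc_self)
      (ae_restrict_of_forall_mem measurableSet_Ioo (fun x hx =>
        mul_nonneg (Real.rpow_nonneg (le_of_lt hx.1) _) (Real.rpow_nonneg (by linarith [hx.2]) _)))]
  congr 1
  rw [← realBeta ha hb, intervalIntegral.integral_of_le (by norm_num : (0:ℝ) ≤ 1),
    ← integral_Ioc_eq_integral_Ioo]

lemma lintegral_image_eq_lintegral_abs_deriv_mul' {s : Set ℝ} {f f' : ℝ → ℝ}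
    (hs : MeasurableSet s) (hf' : ∀ x ∈ s, HasDerivWithinAt f (f' x) s x)
    (hf : InjOn f s) (g : ℝ → ℝ≥0∞) :
    ∫⁻ x in f '' s, g x = ∫⁻ x in s, ENNReal.ofReal |f' x| * g (f x) := by
  simpa only [ContinuousLinearMap.det_toSpanSingleton] using
    lintegral_image_eq_lintegral_abs_det_fderiv_mul volume hs
      (fun x hx => (hf' x hx).hasFDerivWithinAt) hf g

lemma lintegralB {β lam t : ℝ} (hβ : 0 < β) (ht : 0 < t) (hlam : 2*β < lam) :
    ∫⁻ r in Ioi t, ENNReal.ofReal ((r^2 - t^2) ^ (β-1) * r) * ENNReal.ofReal (r ^ (-lam))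
      = ENNReal.ofReal (t ^ (2*β - lam) / 2 *
          (Real.Gamma (lam/2 - β) * Real.Gamma β / Real.Gamma (lam/2))) := by
  have himg : (fun x : ℝ => t * x ^ (-(1/2) : ℝ)) '' Ioo 0 1 = Ioi t := by
    ext y
    constructor
    · rintro ⟨x, hx, rfl⟩
      have h1 : (1:ℝ) < x ^ (-(1/2) : ℝ) := by
        rw [← Real.rpow_zero x]
        exact Real.rpow_lt_rpow_of_exponent_gt hx.1 hx.2 (by norm_num)
      simpa using mul_lt_mul_of_pos_left h1 ht
    · intro hy
      have hy' : t < y := hy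
      have hy0 : 0 < y := lt_trans ht hy'
      refine ⟨(t/y)^(2:ℝ), ⟨Real.rpow_pos_of_pos (div_pos ht hy0) _, ?_⟩, ?_⟩
      · calc (t/y)^(2:ℝ) < 1^(2:ℝ) :=
              Real.rpow_lt_rpow (le_of_lt (div_pos ht hy0)) ((div_lt_one hy0).mpr hy') (by norm_num)
          _ = 1 := by norm_num
      · show t * ((t/y)^(2:ℝ)) ^ (-(1/2):ℝ) = y
        rw [← Real.rpow_mul (le_of_lt (div_pos ht hy0))]
        norm_num
        rw [Real.rpow_neg_one]
        field_simp
  have hderiv : ∀ x ∈ Ioo (0:ℝ) 1,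
      HasDerivWithinAt (fun x : ℝ => t * x ^ (-(1/2) : ℝ))
        (t * (-(1/2) * x ^ (-(1/2) - 1 : ℝ))) (Ioo 0 1) x := fun x hx =>
    ((Real.hasDerivAt_rpow_const (Or.inl hx.1.ne')).const_mul t).hasDerivWithinAt
  have hinj : InjOn (fun x : ℝ => t * x ^ (-(1/2) : ℝ)) (Ioo 0 1) := by
    have : StrictAntiOn (fun x : ℝ => t * x ^ (-(1/2) : ℝ)) (Ioo 0 1) := by
      intro x hx y _ hxy
      exact mul_lt_mul_of_pos_left (Real.rpow_lt_rpow_of_neg hx.1 hxy (by norm_num)) ht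
    exact this.injOn
  rw [← himg, lintegral_image_eq_lintegral_abs_deriv_mul' measurableSet_Ioo hderiv hinj]
  rw [setLIntegral_congr_fun measurableSet_Ioo ((fun x hx => ?_ :
      ∀ x ∈ Ioo (0:ℝ) 1, ENNReal.ofReal |t * (-(1/2) * x ^ (-(1/2) - 1 : ℝ))| *
        (ENNReal.ofReal (((t * x ^ (-(1/2):ℝ)) ^ 2 - t ^ 2) ^ (β-1) * (t * x ^ (-(1/2):ℝ))) *
          ENNReal.ofReal ((t * x ^ (-(1/2):ℝ)) ^ (-lam)))
      = ENNReal.ofReal (t ^ (2*β - lam) / 2) *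
          ENNReal.ofReal (x ^ (lam/2 - β - 1) * (1-x) ^ (β-1))))]
  · rw [lintegral_const_mul' _ _ ENNReal.ofReal_ne_top,
      show (lam/2 - β - 1 : ℝ) = (lam/2 - β) - 1 from by ring,
      betaLintegral (by linarith) hβ,
      show (lam/2 - β + β : ℝ) = lam/2 from by ring, ← ENNReal.ofReal_mul (by positivity)]
  · obtain ⟨hx0, hx1⟩ := hx
    have hx1' : (0:ℝ) < 1 - x := by linarith
    have hrp : ∀ y : ℝ, (0:ℝ) < x ^ y := fun y => Real.rpow_pos_of_pos hx0 y
    have hsq : (t * x ^ (-(1/2):ℝ)) ^ 2 - t ^ 2 = t^2 * (1-x) / x := by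
      have h2 : (x ^ (-(1/2):ℝ))^2 = x⁻¹ := by
        rw [← Real.rpow_natCast (x ^ (-(1/2):ℝ)) 2, ← Real.rpow_mul hx0.le]
        norm_num
        exact Real.rpow_neg_one x
      rw [mul_pow, h2]
      field_simp
    have habs : |t * (-(1/2) * x ^ (-(1/2) - 1 : ℝ))| = t/2 * x ^ (-(3/2) : ℝ) := by
      rw [abs_mul, abs_of_pos ht, abs_mul, abs_neg, abs_of_nonneg (by norm_num : (0:ℝ) ≤ 1/2),
        show (-(1/2) - 1 : ℝ) = -(3/2) from by norm_num, abs_of_pos (hrp _)]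
      ring
    have hpow1 : (t^2 * (1-x) / x) ^ (β-1)
        = t ^ (2*(β-1)) * (1-x)^(β-1) * x ^ (-(β-1)) := by
      rw [Real.div_rpow (by positivity) hx0.le, Real.mul_rpow (by positivity) hx1'.le,
        Real.rpow_neg hx0.le, ← Real.rpow_natCast t 2, ← Real.rpow_mul ht.le]
      norm_num
      ring
    have hpow2 : (t * x ^ (-(1/2):ℝ)) ^ (-lam) = t ^ (-lam) * x ^ (lam/2) := by
      rw [Real.mul_rpow ht.le (hrp _).le, ← Real.rpow_mul hx0.le,
        show (-(1/2) * -lam : ℝ) = lam/2 from by ring]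
    rw [habs, hsq, ← ENNReal.ofReal_mul (by positivity), ← ENNReal.ofReal_mul (by positivity),
      ← ENNReal.ofReal_mul (by positivity)]
    congr 1
    rw [hpow1, hpow2]
    rw [show (t:ℝ)/2 * x ^ (-(3/2):ℝ) * (t ^ (2*(β-1)) * (1-x)^(β-1) * x ^ (-(β-1)) * (t * x ^ (-(1/2):ℝ)) * (t ^ (-lam) * x ^ (lam/2)))
        = (t * t ^ (2*(β-1)) * t * t ^ (-lam)) / 2 * ((x ^ (-(3/2):ℝ) * x ^ (-(β-1)) * x ^ (-(1/2):ℝ) * x ^ (lam/2)) * (1-x)^(β-1)) from by ring]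
    rw [← Real.rpow_add hx0, ← Real.rpow_add hx0, ← Real.rpow_add hx0]
    nth_rewrite 1 [← Real.rpow_one t]
    nth_rewrite 3 [← Real.rpow_one t]
    rw [← Real.rpow_add ht, ← Real.rpow_add ht, ← Real.rpow_add ht]
    ring_nf

lemma lintegralC {β α s : ℝ} (hβ : 0 < β) (hα : 0 < α) (hs : 0 < s) :
    ∫⁻ r in Ioo (0:ℝ) s, ENNReal.ofReal ((s^2 - r^2) ^ (β-1) * r) * ENNReal.ofReal (r ^ (2*α-2))
      = ENNReal.ofReal (s ^ (2*β + 2*α - 2) / 2 *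
          (Real.Gamma α * Real.Gamma β / Real.Gamma (α+β))) := by
  have himg : (fun x : ℝ => s * x ^ ((1:ℝ)/2)) '' Ioo 0 1 = Ioo 0 s := by
    ext y
    constructor
    · rintro ⟨x, hx, rfl⟩
      refine ⟨mul_pos hs (Real.rpow_pos_of_pos hx.1 _), ?_⟩
      have h1 : x ^ ((1:ℝ)/2) < 1 := by
        calc x ^ ((1:ℝ)/2) < 1 ^ ((1:ℝ)/2) := Real.rpow_lt_rpow hx.1.le hx.2 (by norm_num)
          _ = 1 := Real.one_rpow _
      simpa using mul_lt_mul_of_pos_left h1 hs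
    · rintro ⟨hy0, hys⟩
      refine ⟨(y/s)^(2:ℝ), ⟨Real.rpow_pos_of_pos (div_pos hy0 hs) _, ?_⟩, ?_⟩
      · calc (y/s)^(2:ℝ) < 1^(2:ℝ) :=
              Real.rpow_lt_rpow (le_of_lt (div_pos hy0 hs)) ((div_lt_one hs).mpr hys) (by norm_num)
          _ = 1 := by norm_num
      · show s * ((y/s)^(2:ℝ)) ^ ((1:ℝ)/2) = y
        rw [← Real.rpow_mul (le_of_lt (div_pos hy0 hs))]
        norm_num
        field_simp
  have hderiv : ∀ x ∈ Ioo (0:ℝ) 1,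
      HasDerivWithinAt (fun x : ℝ => s * x ^ ((1:ℝ)/2))
        (s * ((1:ℝ)/2 * x ^ ((1:ℝ)/2 - 1))) (Ioo 0 1) x := fun x hx =>
    ((Real.hasDerivAt_rpow_const (Or.inl hx.1.ne')).const_mul s).hasDerivWithinAt
  have hinj : InjOn (fun x : ℝ => s * x ^ ((1:ℝ)/2)) (Ioo 0 1) := by
    have : StrictMonoOn (fun x : ℝ => s * x ^ ((1:ℝ)/2)) (Ioo 0 1) := by
      intro x hx y _ hxy
      exact mul_lt_mul_of_pos_left (Real.rpow_lt_rpow hx.1.le hxy (by norm_num)) hs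
    exact this.injOn
  rw [← himg, lintegral_image_eq_lintegral_abs_deriv_mul' measurableSet_Ioo hderiv hinj]
  rw [setLIntegral_congr_fun measurableSet_Ioo ((fun x hx => ?_ :
      ∀ x ∈ Ioo (0:ℝ) 1, ENNReal.ofReal |s * ((1:ℝ)/2 * x ^ ((1:ℝ)/2 - 1))| *
        (ENNReal.ofReal ((s ^ 2 - (s * x ^ ((1:ℝ)/2)) ^ 2) ^ (β-1) * (s * x ^ ((1:ℝ)/2))) *
          ENNReal.ofReal ((s * x ^ ((1:ℝ)/2)) ^ (2*α-2)))
      = ENNReal.ofReal (s ^ (2*β + 2*α - 2) / 2) *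
          ENNReal.ofReal (x ^ (α - 1) * (1-x) ^ (β-1))))]
  · rw [lintegral_const_mul' _ _ ENNReal.ofReal_ne_top, betaLintegral hα hβ,
      ← ENNReal.ofReal_mul (by positivity)]
  · obtain ⟨hx0, hx1⟩ := hx
    have hx1' : (0:ℝ) < 1 - x := by linarith
    have hrp : ∀ y : ℝ, (0:ℝ) < x ^ y := fun y => Real.rpow_pos_of_pos hx0 y
    have hsq : s ^ 2 - (s * x ^ ((1:ℝ)/2)) ^ 2 = s^2 * (1-x) := by
      have h2 : (x ^ ((1:ℝ)/2))^2 = x := by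
        rw [← Real.rpow_natCast (x ^ ((1:ℝ)/2)) 2, ← Real.rpow_mul hx0.le]
        norm_num
      rw [mul_pow, h2]
      ring
    have habs : |s * ((1:ℝ)/2 * x ^ ((1:ℝ)/2 - 1))| = s/2 * x ^ (-(1/2) : ℝ) := by
      rw [abs_mul, abs_of_pos hs, abs_mul, abs_of_nonneg (by norm_num : (0:ℝ) ≤ 1/2),
        show ((1:ℝ)/2 - 1 : ℝ) = -(1/2) from by norm_num, abs_of_pos (hrp _)]
      ring
    have hpow1 : (s^2 * (1-x)) ^ (β-1) = s ^ (2*(β-1)) * (1-x)^(β-1) := by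
      rw [Real.mul_rpow (by positivity) hx1'.le, ← Real.rpow_natCast s 2, ← Real.rpow_mul hs.le]
      norm_num
    have hpow2 : (s * x ^ ((1:ℝ)/2)) ^ (2*α-2) = s ^ (2*α-2) * x ^ (α-1) := by
      rw [Real.mul_rpow hs.le (hrp _).le, ← Real.rpow_mul hx0.le,
        show ((1:ℝ)/2 * (2*α-2) : ℝ) = α-1 from by ring]
    rw [habs, hsq, ← ENNReal.ofReal_mul (by positivity), ← ENNReal.ofReal_mul (by positivity),
      ← ENNReal.ofReal_mul (by positivity)]
    congr 1
    rw [hpow1, hpow2]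
    rw [show (s:ℝ)/2 * x ^ (-(1/2):ℝ) * (s ^ (2*(β-1)) * (1-x)^(β-1) * (s * x ^ ((1:ℝ)/2)) * (s ^ (2*α-2) * x ^ (α-1)))
        = (s * s * s ^ (2*(β-1)) * s ^ (2*α-2)) / 2 * ((x ^ (-(1/2):ℝ) * x ^ ((1:ℝ)/2) * x ^ (α-1)) * (1-x)^(β-1)) from by ring]
    rw [← Real.rpow_add hx0, ← Real.rpow_add hx0]
    nth_rewrite 1 [← Real.rpow_one s]
    nth_rewrite 2 [← Real.rpow_one s]
    rw [← Real.rpow_add hs, ← Real.rpow_add hs, ← Real.rpow_add hs]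
    ring_nf

/-- The mixed Radon transform of the radial power `f₀(t) = t^{−λ}`, `k < λ < n−j`:
`(I_{j,k} f₀)(s) = c_{j,k} s^{k−λ}`. -/
theorem mixed_radon_power (n j k ℓ : ℕ) (hj : 1 ≤ j) (hk : 1 ≤ k)
    (hℓ : 1 ≤ ℓ) (hn : n = j + k + ℓ)
    (lam : ℝ) (hlam1 : (k : ℝ) < lam) (hlam2 : lam < (n : ℝ) - j) :
    ∀ s > (0:ℝ),
      ENNReal.ofReal
          ((Real.pi ^ ((k : ℝ) / 2) * Real.Gamma (((n : ℝ) - k) / 2) /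
              Real.Gamma (((n : ℝ) - j - k) / 2)) / s ^ ((n : ℝ) - k - 2)) *
        EKplus ((j : ℝ) / 2)
          (fun r => ENNReal.ofReal (r ^ ((ℓ : ℝ) - 2)) *
            EKminus ((k : ℝ) / 2) (fun t => ENNReal.ofReal (t ^ (-lam))) r) s
      = ENNReal.ofReal
          ((Real.pi ^ ((k : ℝ) / 2) * Real.Gamma (((n : ℝ) - k) / 2) *
              Real.Gamma ((lam - k) / 2) * Real.Gamma (((n : ℝ) - j - lam) / 2) /
              (Real.Gamma (((n : ℝ) - j - k) / 2) * Real.Gamma (lam / 2) *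
                Real.Gamma (((n : ℝ) - lam) / 2))) * s ^ ((k : ℝ) - lam)) := by
  intro s hs
  have hnr : (n : ℝ) = (j : ℝ) + k + ℓ := by
    rw [hn]; push_cast; ring
  have hk0 : (0:ℝ) < k := by exact_mod_cast hk
  have hj0 : (0:ℝ) < j := by exact_mod_cast hj
  have hℓ0 : (0:ℝ) < ℓ := by exact_mod_cast hℓ
  have hlam0 : (0:ℝ) < lam := lt_trans hk0 hlam1
  have hGk : 0 < Real.Gamma ((k:ℝ)/2) := Real.Gamma_pos_of_pos (by linarith)
  have hGj : 0 < Real.Gamma ((j:ℝ)/2) := Real.Gamma_pos_of_pos (by linarith)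
  have hGlam : 0 < Real.Gamma (lam/2) := Real.Gamma_pos_of_pos (by linarith)
  have hGlk : 0 < Real.Gamma ((lam - k)/2) := Real.Gamma_pos_of_pos (by linarith)
  have hGnjl : 0 < Real.Gamma (((n:ℝ) - j - lam)/2) := Real.Gamma_pos_of_pos (by linarith)
  have hGnl : 0 < Real.Gamma (((n:ℝ) - lam)/2) := Real.Gamma_pos_of_pos (by linarith)
  have hGnk : 0 < Real.Gamma (((n:ℝ) - k)/2) := Real.Gamma_pos_of_pos (by linarith)
  have hGnjk : 0 < Real.Gamma (((n:ℝ) - j - k)/2) := Real.Gamma_pos_of_pos (by linarith)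
  set C₁ : ℝ := Real.Gamma ((lam - k)/2) / Real.Gamma (lam/2) with hC₁
  have hC₁pos : 0 < C₁ := div_pos hGlk hGlam
  -- Step 1: evaluate the inner EKminus
  have hEKm : ∀ r : ℝ, 0 < r →
      EKminus ((k:ℝ)/2) (fun t => ENNReal.ofReal (t ^ (-lam))) r
        = ENNReal.ofReal (C₁ * r ^ ((k:ℝ) - lam)) := by
    intro r hr
    rw [EKminus, lintegralB (by linarith : (0:ℝ) < (k:ℝ)/2) hr (by linarith : 2*((k:ℝ)/2) < lam),
      ← ENNReal.ofReal_mul (by positivity)]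
    congr 1
    rw [show (2*((k:ℝ)/2) - lam : ℝ) = (k:ℝ) - lam from by ring,
      show (lam/2 - (k:ℝ)/2 : ℝ) = (lam - k)/2 from by ring, hC₁]
    field_simp
  -- Step 2: rewrite the integrand of EKplus
  set α : ℝ := ((n:ℝ) - j - lam)/2 with hα
  have hαpos : 0 < α := by rw [hα]; linarith
  rw [EKplus]
  rw [setLIntegral_congr_fun measurableSet_Ioo ((fun r hr => ?_ :
      ∀ r ∈ Ioo (0:ℝ) s, ENNReal.ofReal ((s ^ 2 - r ^ 2) ^ ((j:ℝ)/2 - 1) * r) *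
        (ENNReal.ofReal (r ^ ((ℓ:ℝ) - 2)) *
          EKminus ((k:ℝ)/2) (fun t => ENNReal.ofReal (t ^ (-lam))) r)
      = ENNReal.ofReal C₁ *
          (ENNReal.ofReal ((s^2 - r^2) ^ ((j:ℝ)/2 - 1) * r) *
            ENNReal.ofReal (r ^ (2*α - 2)))))]
  · rw [lintegral_const_mul' _ _ ENNReal.ofReal_ne_top,
      lintegralC (by linarith : (0:ℝ) < (j:ℝ)/2) hαpos hs]
    have hspow : (0:ℝ) < s ^ ((n:ℝ) - k - 2) := Real.rpow_pos_of_pos hs _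
    rw [← ENNReal.ofReal_mul hC₁pos.le,
      ← ENNReal.ofReal_mul (div_nonneg (by norm_num) hGj.le),
      ← ENNReal.ofReal_mul (div_nonneg (div_nonneg
        (mul_nonneg (Real.rpow_nonneg Real.pi_pos.le _) hGnk.le) hGnjk.le) hspow.le)]
    congr 1
    have hsexp : s ^ (2*((j:ℝ)/2) + 2*α - 2) = s ^ ((k:ℝ) - lam) * s ^ ((n:ℝ) - k - 2) := by
      rw [← Real.rpow_add hs]
      congr 1
      rw [hα]; ring
    rw [hsexp, show (α + (j:ℝ)/2 : ℝ) = ((n:ℝ) - lam)/2 from by rw [hα]; ring, hC₁]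
    field_simp
  · -- pointwise rewriting of the integrand
    obtain ⟨hr0, hrs⟩ := hr
    have hW : (0:ℝ) ≤ (s^2 - r^2) ^ ((j:ℝ)/2 - 1) * r :=
      mul_nonneg (Real.rpow_nonneg (by nlinarith : (0:ℝ) ≤ s^2 - r^2) _) hr0.le
    rw [hEKm r hr0, ← ENNReal.ofReal_mul (Real.rpow_nonneg hr0.le _),
      ← ENNReal.ofReal_mul hW, ← ENNReal.ofReal_mul hW, ← ENNReal.ofReal_mul hC₁pos.le]
    congr 1
    rw [show (2*α - 2 : ℝ) = ((ℓ:ℝ) - 2) + ((k:ℝ) - lam) from by rw [hα, hnr]; ring,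
      Real.rpow_add hr0]
    ring
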